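/- arXiv:2408.03118 — 2 statements merged into one kernel-verified Lean document; each statement's English description precedes it below -/
import Mathlib

section
/- (De la Vallée Poussin criterion, necessity) Let σ be a finite measure and {f_i}_{i∈I} ⊆ L¹(σ) a uniformly integrable family. Then there exists a nondecreasing function φ : [0,∞) → [0,∞) with lim_{t→∞} φ(t)/t = +∞ and a constant C such that ∫ φ(|f_i|) dσ ≤ C for all i ∈ I. -/
open MeasureTheory

theorem deLaValleePoussin_necessity
    {X : Type*} [MeasurableSpace X] (σ : Measure X) [IsFiniteMeasure σ]
    {ι : Type*} (f : ι → X → ℝ)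
    (hint : ∀ i, Integrable (f i) σ)
    (hui : ∀ ε > (0 : ℝ), ∃ M : ℝ, ∀ i,
      ∫ x in {x | M ≤ |f i x|}, |f i x| ∂σ < ε) :
    ∃ φ : ℝ → ℝ, (∀ t, 0 ≤ t → 0 ≤ φ t) ∧ MonotoneOn φ (Set.Ici 0) ∧
      Filter.Tendsto (fun t => φ t / t) Filter.atTop Filter.atTop ∧
      ∃ C : ℝ, ∀ i, ∫⁻ x, ENNReal.ofReal (φ |f i x|) ∂σ ≤ ENNReal.ofReal C := by
  choose M0 hM0 using fun n : ℕ => hui ((1/2) ^ n) (by positivity)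
  set M : ℕ → ℝ := fun n => max (M0 n) ((n : ℝ) + 1) with hMdef
  have hMpos : ∀ n : ℕ, (n : ℝ) + 1 ≤ M n := fun n => le_max_right _ _
  have hMnn : ∀ n : ℕ, 0 ≤ M n := fun n => le_trans (by positivity) (hMpos n)
  have key : ∀ (n : ℕ) i, ∫ x in {x | M n ≤ |f i x|}, |f i x| ∂σ < (1/2) ^ n := by
    intro n i
    refine lt_of_le_of_lt ?_ (hM0 n i)
    refine setIntegral_mono_set ((hint i).abs.integrableOn)
      (Filter.Eventually.of_forall fun x => abs_nonneg _)
      (Filter.Eventually.of_forall fun x hx => ?_)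
    exact le_trans (le_max_left _ _) hx
  set φ : ℝ → ℝ := fun t => ∑' n : ℕ, max (t - M n) 0 with hφdef
  have hsupp : ∀ (t : ℝ) (n : ℕ), ⌈t⌉₊ ≤ n → max (t - M n) 0 = 0 := by
    intro t n hn
    have h1 : t ≤ (n : ℝ) := by
      exact_mod_cast Nat.ceil_le.mp hn
    have : t ≤ M n := h1.trans (le_trans (by linarith) (hMpos n))
    exact max_eq_right (by linarith)
  have hsum : ∀ t : ℝ, Summable (fun n : ℕ => max (t - M n) 0) := by
    intro t
    refine summable_of_ne_finset_zero (s := Finset.range ⌈t⌉₊) ?_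
    intro n hn
    exact hsupp t n (Nat.le_of_not_lt (fun h => hn (Finset.mem_range.mpr h)))
  have hφnn : ∀ t : ℝ, 0 ≤ φ t := fun t => tsum_nonneg (fun n => le_max_right _ _)
  refine ⟨φ, fun t _ => hφnn t, ?_, ?_, ?_⟩
  · -- monotone
    intro a _ b _ hab
    exact Summable.tsum_le_tsum (fun n => max_le_max (sub_le_sub_right hab _) le_rfl)
      (hsum a) (hsum b)
  · -- tendsto
    rw [Filter.tendsto_atTop]
    intro b
    set k : ℕ := ⌈b⌉₊ + 1 with hk
    have hbk : b ≤ (k : ℝ) := (Nat.le_ceil b).trans (by exact_mod_cast Nat.le_succ _)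
    have hk1 : (1 : ℝ) ≤ (k : ℝ) := by exact_mod_cast Nat.one_le_iff_ne_zero.mpr (by simp [hk])
    set S : ℝ := ∑ n ∈ Finset.range (2 * k), M n with hS
    have hS0 : 0 ≤ S := Finset.sum_nonneg fun n _ => hMnn n
    filter_upwards [Filter.eventually_ge_atTop (max 1 S)] with t ht
    have ht1 : (1 : ℝ) ≤ t := le_trans (le_max_left _ _) ht
    have htS : S ≤ t := le_trans (le_max_right _ _) ht
    have ht0 : (0 : ℝ) < t := by linarith
    have hlow : (2 * k : ℝ) * t - S ≤ φ t := by
      have h1 : ∑ n ∈ Finset.range (2 * k), (t - M n) ≤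
          ∑ n ∈ Finset.range (2 * k), max (t - M n) 0 :=
        Finset.sum_le_sum fun n _ => le_max_left _ _
      have h2 : ∑ n ∈ Finset.range (2 * k), max (t - M n) 0 ≤ φ t :=
        Summable.sum_le_tsum _ (fun n _ => le_max_right _ _) (hsum t)
      have h3 : ∑ n ∈ Finset.range (2 * k), (t - M n) = (2 * k : ℝ) * t - S := by
        rw [Finset.sum_sub_distrib, Finset.sum_const, Finset.card_range, nsmul_eq_mul]
        push_cast
        ring
      linarith
    have hst : S / t ≤ 1 := div_le_one_of_le₀ htS ht0.le
    have : b ≤ ((2 * k : ℝ) * t - S) / t := by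
      rw [sub_div, mul_div_assoc, div_self ht0.ne', mul_one]
      linarith
    calc b ≤ ((2 * k : ℝ) * t - S) / t := this
      _ ≤ φ t / t := by gcongr
  · -- integral bound
    refine ⟨2, fun i => ?_⟩
    have hmeas : AEMeasurable (fun x => |f i x|) σ :=
      (hint i).abs.aestronglyMeasurable.aemeasurable
    have step1 : (fun x => ENNReal.ofReal (φ |f i x|)) =
        fun x => ∑' n : ℕ, ENNReal.ofReal (max (|f i x| - M n) 0) := by
      funext x
      exact ENNReal.ofReal_tsum_of_nonneg (fun n => le_max_right _ _) (hsum _)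
    rw [step1]
    rw [lintegral_tsum (f := fun n x => ENNReal.ofReal (max (|f i x| - M n) 0)) (fun n =>
      ((hmeas.sub aemeasurable_const).max aemeasurable_const).ennreal_ofReal)]
    have step3 : ∀ n : ℕ, ∫⁻ x, ENNReal.ofReal (max (|f i x| - M n) 0) ∂σ ≤
        ENNReal.ofReal ((1/2) ^ n) := by
      intro n
      set s : Set X := {x | M n ≤ |f i x|} with hs
      have hns : NullMeasurableSet s σ := by
        have : s = (fun x => |f i x|) ⁻¹' Set.Ici (M n) := rfl
        rw [this]
        exact hmeas.nullMeasurable measurableSet_Ici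
      calc ∫⁻ x, ENNReal.ofReal (max (|f i x| - M n) 0) ∂σ
          ≤ ∫⁻ x, s.indicator (fun x => ENNReal.ofReal (|f i x|)) x ∂σ := by
            refine lintegral_mono fun x => ?_
            by_cases hx : M n ≤ |f i x|
            · rw [Set.indicator_of_mem (show x ∈ s from hx)]
              exact ENNReal.ofReal_le_ofReal
                (max_le (by linarith [hMnn n]) (abs_nonneg _))
            · rw [Set.indicator_of_notMem (show x ∉ s from hx)]
              have : max (|f i x| - M n) 0 = 0 := max_eq_right (by push_neg at hx; linarith)
              simp [this]
        _ = ∫⁻ x in s, ENNReal.ofReal (|f i x|) ∂σ := lintegral_indicator₀ hns _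
        _ = ENNReal.ofReal (∫ x in s, |f i x| ∂σ) :=
            (ofReal_integral_eq_lintegral_ofReal ((hint i).abs.integrableOn)
              (Filter.Eventually.of_forall fun x => abs_nonneg _)).symm
        _ ≤ ENNReal.ofReal ((1/2) ^ n) := ENNReal.ofReal_le_ofReal (key n i).le
    calc ∑' n : ℕ, ∫⁻ x, ENNReal.ofReal (max (|f i x| - M n) 0) ∂σ
        ≤ ∑' n : ℕ, ENNReal.ofReal ((1/2) ^ n) := ENNReal.tsum_le_tsum step3
      _ = ENNReal.ofReal (∑' n : ℕ, (1/2 : ℝ) ^ n) := by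
          rw [ENNReal.ofReal_tsum_of_nonneg (fun n => by positivity) summable_geometric_two]
      _ ≤ ENNReal.ofReal 2 := by
          rw [tsum_geometric_two]
end

section
/- Let f_n ⇀ f weakly in L¹(σ) for a probability measure σ, with f_n ≥ 0. Then liminf_n ∫ H(f_n) dσ ≥ ∫ H(f) dσ, where H(s) = s(log s − 1) + 1. -/
open MeasureTheory Filter
open scoped ENNReal

noncomputable def Hfun : ℝ → ℝ := fun s => if s = 0 then 1 else s * (Real.log s - 1) + 1

/-- clamp of s to [exp(-m), exp m] -/
noncomputable def tcl (m : ℕ) (s : ℝ) : ℝ :=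
  min (max s (Real.exp (-(m : ℝ)))) (Real.exp (m : ℝ))

lemma exp_neg_le_exp (m : ℕ) : Real.exp (-(m : ℝ)) ≤ Real.exp (m : ℝ) :=
  Real.exp_le_exp.2 (by have := Nat.cast_nonneg (α := ℝ) m; linarith)

lemma tcl_mem (m : ℕ) (s : ℝ) :
    Real.exp (-(m : ℝ)) ≤ tcl m s ∧ tcl m s ≤ Real.exp (m : ℝ) :=
  ⟨le_min (le_max_right _ _) (exp_neg_le_exp m), min_le_right _ _⟩

lemma tcl_pos (m : ℕ) (s : ℝ) : 0 < tcl m s :=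
  lt_of_lt_of_le (Real.exp_pos _) (tcl_mem m s).1

lemma log_tcl_abs_le (m : ℕ) (s : ℝ) : |Real.log (tcl m s)| ≤ (m : ℝ) := by
  rw [abs_le]
  constructor
  · calc -(m : ℝ) = Real.log (Real.exp (-(m : ℝ))) := (Real.log_exp _).symm
      _ ≤ Real.log (tcl m s) := Real.log_le_log (Real.exp_pos _) (tcl_mem m s).1
  · calc Real.log (tcl m s) ≤ Real.log (Real.exp (m : ℝ)) :=
        Real.log_le_log (tcl_pos m s) (tcl_mem m s).2
      _ = m := Real.log_exp _

lemma key0 {s : ℝ} (hs : 0 < s) : 0 ≤ s * Real.log s - s + 1 := by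
  have h1 : -Real.log s + 1 ≤ Real.exp (-Real.log s) := Real.add_one_le_exp _
  have h2 : Real.exp (-Real.log s) = s⁻¹ := by
    rw [Real.exp_neg, Real.exp_log hs]
  have h3 := mul_le_mul_of_nonneg_left h1 hs.le
  rw [h2] at h3
  have h4 : s * s⁻¹ = 1 := by field_simp
  nlinarith

lemma Hfun_nonneg {s : ℝ} (hs : 0 ≤ s) : 0 ≤ Hfun s := by
  rcases eq_or_lt_of_le hs with h | h
  · simp [Hfun, ← h]
  · simp only [Hfun, if_neg (ne_of_gt h)]
    nlinarith [key0 h]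

/-- conjugate inequality: s·u - (eᵘ - 1) ≤ H(s) for s ≥ 0. -/
lemma conj_le {s u : ℝ} (hs : 0 ≤ s) : s * u - (Real.exp u - 1) ≤ Hfun s := by
  rcases eq_or_lt_of_le hs with h | h
  · rw [← h]
    have hH : Hfun 0 = 1 := by simp [Hfun]
    rw [hH]
    nlinarith [Real.exp_pos u]
  · simp only [Hfun, if_neg (ne_of_gt h)]
    have h1 : (u - Real.log s) + 1 ≤ Real.exp (u - Real.log s) := Real.add_one_le_exp _
    have h2 : s * Real.exp (u - Real.log s) = Real.exp u := by
      rw [Real.exp_sub, Real.exp_log h]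
      field_simp
    nlinarith [mul_le_mul_of_nonneg_left h1 h.le]

/-- nonnegativity of the approximations -/
lemma step_nonneg (m : ℕ) (s : ℝ) :
    0 ≤ s * Real.log (tcl m s) - (tcl m s - 1) := by
  have key := key0 (tcl_pos m s)
  have hfac : 0 ≤ (s - tcl m s) * Real.log (tcl m s) := by
    rcases le_total s (Real.exp (-(m : ℝ))) with hle | hge
    · have hta : tcl m s = Real.exp (-(m : ℝ)) := by
        rw [tcl, max_eq_right hle, min_eq_left (exp_neg_le_exp m)]
      rw [hta, Real.log_exp]
      have h1 : s - Real.exp (-(m : ℝ)) ≤ 0 := sub_nonpos.2 hle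
      have h2 : -(m : ℝ) ≤ 0 := by have := Nat.cast_nonneg (α := ℝ) m; linarith
      nlinarith
    · rcases le_total s (Real.exp (m : ℝ)) with hle2 | hge2
      · have hta : tcl m s = s := by
          rw [tcl, max_eq_left hge, min_eq_left hle2]
        rw [hta]; simp
      · have hta : tcl m s = Real.exp (m : ℝ) := by
          rw [tcl, max_eq_left hge, min_eq_right hge2]
        rw [hta, Real.log_exp]
        exact mul_nonneg (by linarith [hge2, (exp_neg_le_exp m)]
          ) (Nat.cast_nonneg m)
  nlinarith

/-- convergence of approximations to Hfun for s ≥ 0 -/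
lemma step_tendsto {s : ℝ} (hs : 0 ≤ s) :
    Tendsto (fun m : ℕ => s * Real.log (tcl m s) - (tcl m s - 1)) atTop (nhds (Hfun s)) := by
  rcases eq_or_lt_of_le hs with h | h
  · have heq : ∀ m : ℕ, s * Real.log (tcl m s) - (tcl m s - 1)
        = 1 - Real.exp (-(m : ℝ)) := by
      intro m
      have : tcl m s = Real.exp (-(m : ℝ)) := by
        rw [tcl, max_eq_right (by rw [← h]; exact (Real.exp_pos _).le),
          min_eq_left (exp_neg_le_exp m)]
      rw [this, ← h]; ring
    simp only [heq]
    have hH : Hfun s = 1 := by simp [Hfun, ← h]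
    rw [hH]
    have : Tendsto (fun m : ℕ => Real.exp (-(m : ℝ))) atTop (nhds 0) :=
      Real.tendsto_exp_atBot.comp
        (tendsto_neg_atBot_iff.2 tendsto_natCast_atTop_atTop)
    simpa using (tendsto_const_nhds (x := (1:ℝ)) (f := atTop)).sub this
  · apply Tendsto.congr' _ (tendsto_const_nhds)
    filter_upwards [eventually_ge_atTop ⌈|Real.log s|⌉₊] with m hm
    have hbd : |Real.log s| ≤ (m : ℝ) :=
      le_trans (Nat.le_ceil _) (Nat.cast_le.2 hm)
    rw [abs_le] at hbd
    have h1 : Real.exp (-(m : ℝ)) ≤ s := by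
      calc Real.exp (-(m : ℝ)) ≤ Real.exp (Real.log s) := Real.exp_le_exp.2 hbd.1
        _ = s := Real.exp_log h
    have h2 : s ≤ Real.exp (m : ℝ) := by
      calc s = Real.exp (Real.log s) := (Real.exp_log h).symm
        _ ≤ Real.exp (m : ℝ) := Real.exp_le_exp.2 hbd.2
    have hta : tcl m s = s := by rw [tcl, max_eq_left h1, min_eq_left h2]
    rw [Hfun]
    simp only [if_neg (ne_of_gt h), hta]
    ring

/-- divergence of approximations for s < 0 -/
lemma step_tendsto_neg {s : ℝ} (hs : s < 0) :
    Tendsto (fun m : ℕ => s * Real.log (tcl m s) - (tcl m s - 1)) atTop atTop := by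
  have heq : ∀ m : ℕ, s * Real.log (tcl m s) - (tcl m s - 1)
      = (m : ℝ) * (-s) + (1 - Real.exp (-(m : ℝ))) := by
    intro m
    have : tcl m s = Real.exp (-(m : ℝ)) := by
      rw [tcl, max_eq_right (le_trans hs.le (Real.exp_pos _).le),
        min_eq_left (exp_neg_le_exp m)]
    rw [this, Real.log_exp]; ring
  simp only [heq]
  apply tendsto_atTop_mono (fun m : ℕ => ?_)
    (Tendsto.atTop_mul_const (by linarith : (0:ℝ) < -s) tendsto_natCast_atTop_atTop)
  have : Real.exp (-(m : ℝ)) ≤ 1 := by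
    rw [Real.exp_le_one_iff]
    have := Nat.cast_nonneg (α := ℝ) m; linarith
  linarith

theorem entropy_weak_l1_lsc
    {X : Type*} [MeasurableSpace X] (σ : Measure X) [IsProbabilityMeasure σ]
    (f : ℕ → X → ℝ) (g : X → ℝ)
    (hfint : ∀ n, Integrable (f n) σ) (hgint : Integrable g σ)
    (hf0 : ∀ n x, 0 ≤ f n x)
    (hweak : ∀ φ : X → ℝ, MemLp φ ⊤ σ →
      Tendsto (fun n => ∫ x, f n x * φ x ∂σ) atTop (nhds (∫ x, g x * φ x ∂σ))) :
    (∫⁻ x, ENNReal.ofReal (Hfun (g x)) ∂σ) ≤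
      atTop.liminf (fun n => ∫⁻ x, ENNReal.ofReal (Hfun (f n x)) ∂σ) := by
  classical
  set L : ℝ≥0∞ := atTop.liminf (fun n => ∫⁻ x, ENNReal.ofReal (Hfun (f n x)) ∂σ) with hL
  -- the bounded test functions
  set φ : ℕ → X → ℝ := fun m x => Real.log (tcl m (g x)) with hφdef
  set h : ℕ → X → ℝ := fun m x => g x * φ m x - (tcl m (g x) - 1) with hhdef
  have hgm : AEMeasurable g σ := hgint.aemeasurable
  have htm : ∀ m, AEMeasurable (fun x => tcl m (g x)) σ := fun m =>
    (hgm.max aemeasurable_const).min aemeasurable_const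
  have hφm : ∀ m, AEMeasurable (φ m) σ := fun m =>
    Real.measurable_log.comp_aemeasurable (htm m)
  have hφbd : ∀ m x, ‖φ m x‖ ≤ (m : ℝ) := fun m x => by
    simpa [Real.norm_eq_abs] using log_tcl_abs_le m (g x)
  have hφmem : ∀ m, MemLp (φ m) ⊤ σ := fun m =>
    memLp_top_of_bound (hφm m).aestronglyMeasurable _
      (Eventually.of_forall (hφbd m))
  have htint : ∀ m, Integrable (fun x => tcl m (g x) - 1) σ := by
    intro m
    have : Integrable (fun x => tcl m (g x)) σ :=
      (memLp_top_of_bound (htm m).aestronglyMeasurable (Real.exp (m : ℝ))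
        (Eventually.of_forall fun x => by
          rw [Real.norm_eq_abs, abs_of_pos (tcl_pos m (g x))]
          exact (tcl_mem m (g x)).2)).integrable le_top
    exact this.sub (integrable_const 1)
  have hmulint : ∀ (ψ : X → ℝ), Integrable ψ σ → ∀ m,
      Integrable (fun x => ψ x * φ m x) σ := by
    intro ψ hψ m
    have := hψ.bdd_mul (hφm m).aestronglyMeasurable (Eventually.of_forall (hφbd m))
    simpa [mul_comm] using this
  have hhint : ∀ m, Integrable (h m) σ := fun m =>
    (hmulint g hgint m).sub (htint m)
  have hnint : ∀ n m, Integrable (fun x => f n x * φ m x - (tcl m (g x) - 1)) σ :=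
    fun n m => (hmulint (f n) (hfint n) m).sub (htint m)
  -- each n-approximation is below the entropy
  have hbelow : ∀ n m,
      ENNReal.ofReal (∫ x, (f n x * φ m x - (tcl m (g x) - 1)) ∂σ)
        ≤ ∫⁻ x, ENNReal.ofReal (Hfun (f n x)) ∂σ := by
    intro n m
    have hptwise : ∀ x, f n x * φ m x - (tcl m (g x) - 1) ≤ Hfun (f n x) := by
      intro x
      have : tcl m (g x) = Real.exp (φ m x) := (Real.exp_log (tcl_pos m (g x))).symm
      rw [this]
      exact conj_le (hf0 n x)
    have hqint : Integrable (fun x => max (f n x * φ m x - (tcl m (g x) - 1)) 0) σ :=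
      (hnint n m).pos_part
    calc ENNReal.ofReal (∫ x, (f n x * φ m x - (tcl m (g x) - 1)) ∂σ)
        ≤ ENNReal.ofReal (∫ x, max (f n x * φ m x - (tcl m (g x) - 1)) 0 ∂σ) :=
          ENNReal.ofReal_le_ofReal
            (integral_mono (hnint n m) hqint fun x => le_max_left _ _)
      _ = ∫⁻ x, ENNReal.ofReal (max (f n x * φ m x - (tcl m (g x) - 1)) 0) ∂σ :=
          ofReal_integral_eq_lintegral_ofReal hqint
            (Eventually.of_forall fun x => le_max_right _ _)
      _ ≤ ∫⁻ x, ENNReal.ofReal (Hfun (f n x)) ∂σ :=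
          lintegral_mono fun x => ENNReal.ofReal_le_ofReal
            (max_le (hptwise x) (Hfun_nonneg (hf0 n x)))
  -- pass to the weak limit
  have hJle : ∀ m, ENNReal.ofReal (∫ x, h m x ∂σ) ≤ L := by
    intro m
    have htend : Tendsto (fun n => ∫ x, (f n x * φ m x - (tcl m (g x) - 1)) ∂σ)
        atTop (nhds (∫ x, h m x ∂σ)) := by
      have e1 : ∀ n, ∫ x, (f n x * φ m x - (tcl m (g x) - 1)) ∂σ
          = (∫ x, f n x * φ m x ∂σ) - ∫ x, (tcl m (g x) - 1) ∂σ := fun n =>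
        integral_sub (hmulint (f n) (hfint n) m) (htint m)
      have e2 : ∫ x, h m x ∂σ
          = (∫ x, g x * φ m x ∂σ) - ∫ x, (tcl m (g x) - 1) ∂σ :=
        integral_sub (hmulint g hgint m) (htint m)
      simp only [e1, e2]
      exact (hweak (φ m) (hφmem m)).sub tendsto_const_nhds
    have htend' := ENNReal.tendsto_ofReal htend
    calc ENNReal.ofReal (∫ x, h m x ∂σ)
        = atTop.liminf (fun n =>
            ENNReal.ofReal (∫ x, (f n x * φ m x - (tcl m (g x) - 1)) ∂σ)) :=
          htend'.liminf_eq.symm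
      _ ≤ L := liminf_le_liminf (Eventually.of_forall fun n => hbelow n m)
  have hJeq : ∀ m, ∫⁻ x, ENNReal.ofReal (h m x) ∂σ = ENNReal.ofReal (∫ x, h m x ∂σ) := by
    intro m
    refine (ofReal_integral_eq_lintegral_ofReal (hhint m)
      (Eventually.of_forall fun x => ?_)).symm
    simpa [hhdef, hφdef] using step_nonneg m (g x)
  -- pointwise liminf bound
  have hpt : ∀ x, ENNReal.ofReal (Hfun (g x))
      ≤ atTop.liminf (fun m => ENNReal.ofReal (h m x)) := by
    intro x
    rcases le_or_gt 0 (g x) with hx | hx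
    · have : Tendsto (fun m => ENNReal.ofReal (h m x)) atTop
          (nhds (ENNReal.ofReal (Hfun (g x)))) :=
        ENNReal.tendsto_ofReal (step_tendsto hx)
      rw [this.liminf_eq]
    · have : Tendsto (fun m => ENNReal.ofReal (h m x)) atTop (nhds ⊤) :=
        ENNReal.tendsto_ofReal_atTop.comp (step_tendsto_neg hx)
      rw [this.liminf_eq]
      exact le_top
  calc (∫⁻ x, ENNReal.ofReal (Hfun (g x)) ∂σ)
      ≤ ∫⁻ x, atTop.liminf (fun m => ENNReal.ofReal (h m x)) ∂σ := lintegral_mono hpt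
    _ ≤ atTop.liminf (fun m => ∫⁻ x, ENNReal.ofReal (h m x) ∂σ) :=
        lintegral_liminf_le' fun m =>
          ENNReal.measurable_ofReal.comp_aemeasurable
            ((hgm.mul (hφm m)).sub ((htm m).sub aemeasurable_const))
    _ ≤ L := by
        have hb : ∀ m, ∫⁻ x, ENNReal.ofReal (h m x) ∂σ ≤ L := fun m =>
          (hJeq m) ▸ hJle m
        calc atTop.liminf (fun m => ∫⁻ x, ENNReal.ofReal (h m x) ∂σ)
            ≤ atTop.liminf (fun _ : ℕ => L) :=
              liminf_le_liminf (Eventually.of_forall hb)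
          _ = L := liminf_const L
end
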